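/- Suppose f: ℝ^n → ℝ is convex differentiable, g(x) = Gx + d, and λ ≥ 0 is fixed. Then the augmented Lagrangian L(x,λ) = f(x) + Σᵢ ([λᵢ > 0 ∨ gᵢ(x) ≥ 0] μ gᵢ(x)² + λᵢ gᵢ(x)) is convex in x. -/

import Mathlib

lemma phi_convex (mu l : ℝ) (hmu : 0 < mu) (hl : 0 ≤ l) :
    ConvexOn ℝ Set.univ (fun t : ℝ => (if l > 0 ∨ t ≥ 0 then (1:ℝ) else 0) * mu * t ^ 2 + l * t) := by
  constructor
  · exact convex_univ
  intro s _ t _ a b ha hb hab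
  simp only [smul_eq_mul]
  have hb1 : b = 1 - a := by linarith
  subst hb1
  by_cases hP : l > 0
  · simp only [hP, true_or, if_true]
    nlinarith [mul_nonneg (mul_nonneg hmu.le (mul_nonneg ha hb)) (sq_nonneg (s - t))]
  · have hl0 : l = 0 := le_antisymm (not_lt.mp hP) hl
    subst hl0
    simp only [zero_mul, add_zero, lt_self_iff_false, false_or]
    split_ifs with h1 h2 h3 h4 h5 h6 h7 <;> push_neg at *
    · nlinarith [mul_nonneg (mul_nonneg hmu.le (mul_nonneg ha hb)) (sq_nonneg (s - t))]
    · have h9 : (a * s + (1 - a) * t) ^ 2 ≤ (a * s) ^ 2 := by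
        nlinarith [mul_nonneg hb (neg_nonneg.mpr h3.le)]
      have h5 : (a * s) ^ 2 ≤ a * s ^ 2 := by nlinarith [mul_nonneg (mul_nonneg ha hb) (sq_nonneg s)]
      nlinarith [mul_le_mul_of_nonneg_left (h9.trans h5) hmu.le]
    · have h9 : (a * s + (1 - a) * t) ^ 2 ≤ ((1 - a) * t) ^ 2 := by
        nlinarith [mul_nonneg ha (neg_nonneg.mpr h2.le)]
      have h5 : ((1 - a) * t) ^ 2 ≤ (1 - a) * t ^ 2 := by
        nlinarith [mul_nonneg (mul_nonneg ha hb) (sq_nonneg t)]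
      nlinarith [mul_le_mul_of_nonneg_left (h9.trans h5) hmu.le]
    · nlinarith [mul_nonneg ha (neg_nonneg.mpr h2.le), mul_nonneg hb (neg_nonneg.mpr h4.le)]
    · nlinarith [mul_nonneg (mul_nonneg ha hmu.le) (sq_nonneg s), mul_nonneg (mul_nonneg hb hmu.le) (sq_nonneg t)]
    · nlinarith [mul_nonneg (mul_nonneg ha hmu.le) (sq_nonneg s)]
    · nlinarith [mul_nonneg (mul_nonneg hb hmu.le) (sq_nonneg t)]
    · nlinarith [sq_nonneg (a * s + (1 - a) * t)]

lemma comp_affine {n : ℕ} (φ : ℝ → ℝ) (hφ : ConvexOn ℝ Set.univ φ)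
    (c : (Fin n → ℝ) → ℝ)
    (hc : ∀ (a b : ℝ) (x y : Fin n → ℝ), a + b = 1 →
      c (a • x + b • y) = a * c x + b * c y) :
    ConvexOn ℝ Set.univ (fun x => φ (c x)) := by
  refine ⟨convex_univ, fun x _ y _ a b ha hb hab => ?_⟩
  simp only [hc a b x y hab]
  simpa using hφ.2 (Set.mem_univ (c x)) (Set.mem_univ (c y)) ha hb hab

lemma convexOn_sum {α : Type*} {n : ℕ} (s : Finset α) (F : α → (Fin n → ℝ) → ℝ)
    (h : ∀ i ∈ s, ConvexOn ℝ Set.univ (F i)) :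
    ConvexOn ℝ Set.univ (fun x => ∑ i ∈ s, F i x) := by
  classical
  induction s using Finset.induction_on with
  | empty => simpa using convexOn_const (0:ℝ) convex_univ
  | insert _ _ hx ih =>
    simp only [Finset.sum_insert hx]
    exact (h _ (Finset.mem_insert_self _ _)).add
      (ih fun i hi => h i (Finset.mem_insert_of_mem hi))

/-- For convex differentiable `f`, affine `g`, `λ ≥ 0` and `μ > 0`, the
augmented Lagrangian `L(·,λ)` is convex. -/
theorem stmt_19 {n m : ℕ} (f : (Fin n → ℝ) → ℝ)
    (hfc : ConvexOn ℝ Set.univ f) (hfd : Differentiable ℝ f)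
    (G : Matrix (Fin m) (Fin n) ℝ) (d : Fin m → ℝ)
    (g : (Fin n → ℝ) → Fin m → ℝ) (hg : g = fun x => G.mulVec x + d)
    (mu : ℝ) (hmu : mu > 0)
    (lam : Fin m → ℝ) (hlam : ∀ i, lam i ≥ 0) :
    ConvexOn ℝ Set.univ (fun x : Fin n → ℝ =>
      f x + ∑ i, ((if lam i > 0 ∨ g x i ≥ 0 then (1:ℝ) else 0) * mu * (g x i) ^ 2
                   + lam i * g x i)) := by
  refine hfc.add (convexOn_sum Finset.univ _ fun i _ => ?_)
  have hc : ∀ (a b : ℝ) (x y : Fin n → ℝ), a + b = 1 →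
      g (a • x + b • y) i = a * g x i + b * g y i := by
    intro a b x y hab
    subst hg
    simp only [Pi.add_apply, Matrix.mulVec_add, Matrix.mulVec_smul, Pi.smul_apply,
      smul_eq_mul]
    have : a * d i + b * d i = d i := by rw [← add_mul, hab, one_mul]
    ring_nf
    linarith [this]
  exact comp_affine _ (phi_convex mu (lam i) hmu (hlam i)) (fun x => g x i) hc
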